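/- Let a > 0 and σ > 0 with a·σ > π/2. Then there exists a complex number λ with strictly positive real part satisfying λ + a·exp(−σ·λ) = 0. -/

import Mathlib

open Real Complex Filter Set Topology

theorem stmt_3 (a σ : ℝ) (ha : 0 < a) (hσ : 0 < σ) (hunst : Real.pi / 2 < a * σ) :
    ∃ lam : ℂ, 0 < lam.re ∧ lam + (a : ℂ) * Complex.exp (-(σ : ℂ) * lam) = 0 := by
  have hpi := Real.pi_pos
  set g : ℝ → ℝ := fun θ => Real.log (a * σ * Real.sin θ / θ) + θ * Real.cos θ / Real.sin θ with hgdef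
  have hmemIoo : Ioo (π/2) π ∈ 𝓝[<] π :=
    Ioo_mem_nhdsLT_of_mem ⟨by linarith, le_refl _⟩
  have hghalf : 0 < g (π / 2) := by
    simp only [hgdef, Real.sin_pi_div_two, Real.cos_pi_div_two, mul_zero, zero_div, add_zero,
      mul_one]
    apply Real.log_pos
    rw [lt_div_iff₀ (by linarith)]
    linarith
  have hlim : Tendsto g (𝓝[<] π) atBot := by
    have hsin : Tendsto (fun θ => Real.sin θ) (𝓝[<] π) (𝓝[>] 0) := by
      rw [tendsto_nhdsWithin_iff]
      refine ⟨?_, ?_⟩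
      · have := (Real.continuous_sin.tendsto π).mono_left (nhdsWithin_le_nhds (s := Iio π))
        simpa using this
      · filter_upwards [hmemIoo] with θ hθ
        exact Real.sin_pos_of_pos_of_lt_pi (by linarith [hθ.1]) hθ.2
    have h1 : Tendsto (fun θ => Real.log (a * σ * Real.sin θ / θ)) (𝓝[<] π) atBot := by
      apply Real.tendsto_log_nhdsGT_zero.comp
      rw [tendsto_nhdsWithin_iff]
      refine ⟨?_, ?_⟩
      · have hc : Tendsto (fun θ => a * σ * Real.sin θ / θ) (𝓝 π) (𝓝 (a * σ * Real.sin π / π)) :=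
          ((continuous_const.mul Real.continuous_sin).tendsto π).div tendsto_id (ne_of_gt hpi)
        rw [Real.sin_pi, mul_zero, zero_div] at hc
        exact hc.mono_left nhdsWithin_le_nhds
      · filter_upwards [hmemIoo] with θ hθ
        have hs := Real.sin_pos_of_pos_of_lt_pi (by linarith [hθ.1] : 0 < θ) hθ.2
        exact div_pos (mul_pos (mul_pos ha hσ) hs) (by linarith [hθ.1])
    have h2 : Tendsto (fun θ => θ * Real.cos θ / Real.sin θ) (𝓝[<] π) atBot := by
      have hac : Tendsto (fun θ => θ * Real.cos θ) (𝓝[<] π) (𝓝 (π * Real.cos π)) :=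
        ((continuous_id.mul Real.continuous_cos).tendsto π).mono_left nhdsWithin_le_nhds
      have hb : Tendsto (fun θ => (Real.sin θ)⁻¹) (𝓝[<] π) atTop :=
        tendsto_inv_nhdsGT_zero.comp hsin
      have := hac.neg_mul_atTop (by rw [Real.cos_pi]; linarith) hb
      simpa [div_eq_mul_inv] using this
    simpa [hgdef] using Filter.Tendsto.atBot_add_atBot h1 h2
  obtain ⟨θ₁, hθ₁neg, hθ₁mem⟩ : ∃ θ₁, g θ₁ < 0 ∧ θ₁ ∈ Ioo (π/2) π := by
    have hev : ∀ᶠ θ in 𝓝[<] π, θ ∈ Ioo (π/2) π := hmemIoo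
    exact ((hlim.eventually (eventually_lt_atBot 0)).and hev).exists
  obtain ⟨θ, hθmem, hθ0⟩ : ∃ θ ∈ Icc (π/2) θ₁, g θ = 0 := by
    have hsub : ∀ x ∈ Icc (π/2) θ₁, 0 < Real.sin x ∧ 0 < x := fun x hx =>
      ⟨Real.sin_pos_of_pos_of_lt_pi (by linarith [hx.1]) (lt_of_le_of_lt hx.2 hθ₁mem.2),
        by linarith [hx.1]⟩
    have hcont : ContinuousOn g (Icc (π/2) θ₁) := by
      apply ContinuousOn.add
      · apply ContinuousOn.log
        · exact ((continuous_const.mul Real.continuous_sin).continuousOn).div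
            continuousOn_id (fun x hx => ne_of_gt (hsub x hx).2)
        · intro x hx
          exact ne_of_gt (div_pos (mul_pos (mul_pos ha hσ) (hsub x hx).1) (hsub x hx).2)
      · exact ((continuous_id.mul Real.continuous_cos).continuousOn).div
          Real.continuous_sin.continuousOn (fun x hx => ne_of_gt (hsub x hx).1)
    have h0mem : (0:ℝ) ∈ Icc (g θ₁) (g (π/2)) := ⟨le_of_lt hθ₁neg, le_of_lt hghalf⟩
    obtain ⟨θ, hθ, hgθ⟩ := intermediate_value_Icc' (le_of_lt hθ₁mem.1) hcont h0mem
    exact ⟨θ, hθ, hgθ⟩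
  -- facts about θ
  have hθlt : θ < π := lt_of_le_of_lt hθmem.2 hθ₁mem.2
  have hθgt : π/2 < θ := by
    rcases lt_or_eq_of_le hθmem.1 with h | h
    · exact h
    · exfalso; rw [← h] at hθ0; rw [hθ0] at hghalf; exact lt_irrefl 0 hghalf
  have hs : 0 < Real.sin θ := Real.sin_pos_of_pos_of_lt_pi (by linarith) hθlt
  have hc : Real.cos θ < 0 := Real.cos_neg_of_pi_div_two_lt_of_lt hθgt (by linarith)
  set x : ℝ := -(θ * Real.cos θ) / (σ * Real.sin θ) with hxdef
  have hx : 0 < x := div_pos (by nlinarith) (by positivity)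
  have hσx : -(σ * x) = θ * Real.cos θ / Real.sin θ := by
    rw [hxdef]; field_simp
  have hexp : Real.exp (-(σ * x)) = θ / (a * σ * Real.sin θ) := by
    rw [hσx]
    have hlog : θ * Real.cos θ / Real.sin θ = Real.log (θ / (a * σ * Real.sin θ)) := by
      have h1 : θ / (a * σ * Real.sin θ) = (a * σ * Real.sin θ / θ)⁻¹ := by
        rw [inv_div]
      rw [h1, Real.log_inv]
      simp only [hgdef] at hθ0
      linarith
    rw [hlog, Real.exp_log (div_pos (by linarith) (by positivity))]
  refine ⟨⟨x, θ/σ⟩, hx, ?_⟩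
  have hzre : ((-(σ:ℂ)) * ⟨x, θ/σ⟩).re = -(σ*x) := by
    simp [Complex.mul_re]
  have hzim : ((-(σ:ℂ)) * ⟨x, θ/σ⟩).im = -θ := by
    simp [Complex.mul_im]
    field_simp
  apply Complex.ext
  · simp only [Complex.add_re, Complex.mul_re, Complex.exp_re, Complex.exp_im, hzre, hzim,
      Real.cos_neg, Real.sin_neg, Complex.ofReal_re, Complex.ofReal_im, Complex.zero_re]
    rw [hexp, hxdef]
    field_simp
    ring
  · simp only [Complex.add_im, Complex.mul_im, Complex.exp_re, Complex.exp_im, hzre, hzim,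
      Real.cos_neg, Real.sin_neg, Complex.ofReal_re, Complex.ofReal_im, Complex.zero_im]
    rw [hexp]
    field_simp
    ring
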